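/- Let λ > 0, γ > 0, C > 0 be such that p(x,y,t) ≤ C e^{−λt} for all x,y ∈ G and all t ≥ γ. Let q > 1 and let h : [0,∞) → [0,∞) be locally integrable with H̃ := ∫₀^{+∞} h(t) e^{−λ(q−1)t} dt < +∞. Fix y₀ ∈ G. Then there exists ε₀ > 0 such that for every bounded u₀ : G → ℝ with 0 ≤ u₀(x) ≤ ε p(x,y₀,γ) for all x ∈ G and some ε ∈ (0, ε₀], there exist M > 0 and a function u : G × (0,∞) → ℝ with 0 ≤ u(x,t) ≤ M p(x,y₀,t+γ) for all x ∈ G, t > 0, satisfying u(x,t) = ∑_{y∈G} p(x,y,t) u₀(y) μ(y) + ∫₀^t ∑_{y∈G} p(x,y,t−s) h(s) u(y,s)^q μ(y) ds for all x ∈ G and all t > 0. -/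

import Mathlib

open MeasureTheory Set
open scoped ENNReal NNReal
set_option linter.unusedSectionVars false
set_option maxHeartbeats 1000000

namespace GEAux

theorem rpow_iSup {ι : Sort*} (f : ι → ℝ≥0∞) {q : ℝ} (hq : 0 < q) :
    (⨆ i, f i) ^ q = ⨆ i, f i ^ q := by
  have h := map_iSup (ENNReal.orderIsoRpow q hq) f
  simp only [ENNReal.orderIsoRpow_apply] at h
  exact h

theorem jensen_tsum {ι : Type*} (w f : ι → ℝ≥0∞) {q : ℝ} (hq : 1 ≤ q)
    (hw : ∑' i, w i ≤ 1) : (∑' i, w i * f i) ^ q ≤ ∑' i, w i * f i ^ q := by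
  have hq0 : (0:ℝ) < q := lt_of_lt_of_le one_pos hq
  rw [ENNReal.tsum_eq_iSup_sum (f := fun i => w i * f i), rpow_iSup _ hq0]
  refine iSup_le fun s => ?_
  have hws : ∑ i ∈ s, w i ≤ 1 := le_trans (ENNReal.sum_le_tsum s) hw
  have key : (∑ i ∈ s, w i * f i) ^ q ≤ ∑ i ∈ s, w i * f i ^ q := by
    rcases eq_or_ne (∑ i ∈ s, w i) 0 with hT | hT
    · have hz : ∀ i ∈ s, w i = 0 := fun i hi => (Finset.sum_eq_zero_iff.mp hT) i hi
      have h1 : (∑ i ∈ s, w i * f i) = 0 :=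
        Finset.sum_eq_zero fun i hi => by rw [hz i hi, zero_mul]
      rw [h1, ENNReal.zero_rpow_of_pos hq0]
      exact zero_le
    · set T := ∑ i ∈ s, w i with hTdef
      set S := ∑ i ∈ s, w i * f i with hSdef
      set R := ∑ i ∈ s, w i * f i ^ q with hRdef
      have hTtop : T ≠ ⊤ := ne_top_of_le_ne_top ENNReal.one_ne_top hws
      have hnorm : ∑ i ∈ s, T⁻¹ * w i = 1 := by
        rw [← Finset.mul_sum, ← hTdef, ENNReal.inv_mul_cancel hT hTtop]
      have hmain := ENNReal.rpow_arith_mean_le_arith_mean_rpow s (fun i => T⁻¹ * w i) f hnorm hq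
      have hS1 : ∑ i ∈ s, (T⁻¹ * w i) * f i = T⁻¹ * S := by
        rw [hSdef, Finset.mul_sum]; exact Finset.sum_congr rfl fun i _ => by ring
      have hS2 : ∑ i ∈ s, (T⁻¹ * w i) * f i ^ q = T⁻¹ * R := by
        rw [hRdef, Finset.mul_sum]; exact Finset.sum_congr rfl fun i _ => by ring
      rw [hS1, hS2] at hmain
      have hid : S = T * (T⁻¹ * S) := by
        rw [← mul_assoc, ENNReal.mul_inv_cancel hT hTtop, one_mul]
      calc S ^ q = (T * (T⁻¹ * S)) ^ q := by rw [← hid]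
        _ = T ^ q * (T⁻¹ * S) ^ q := ENNReal.mul_rpow_of_nonneg _ _ hq0.le
        _ ≤ T ^ q * (T⁻¹ * R) := mul_le_mul_right hmain _
        _ = T ^ (q - 1) * (T * T⁻¹) * R := by
            have hTq : T ^ q = T ^ (q - 1) * T := by
              conv_lhs => rw [show q = (q - 1) + 1 by ring]
              rw [ENNReal.rpow_add _ _ hT hTtop, ENNReal.rpow_one]
            rw [hTq]; ring
        _ = T ^ (q - 1) * R := by rw [ENNReal.mul_inv_cancel hT hTtop, mul_one]
        _ ≤ 1 * R := mul_le_mul_left (ENNReal.rpow_le_one hws (by linarith)) _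
        _ = R := one_mul R
  exact le_trans key (ENNReal.sum_le_tsum s)

theorem real_rpow_add_le {q A d0 a d : ℝ} (hq : 1 < q) (ha : 0 ≤ a) (haA : a ≤ A)
    (hd : 0 ≤ d) (hdd : d ≤ d0) :
    (a + d) ^ q ≤ a ^ q + q * (A + d0) ^ (q - 1) * d := by
  rcases eq_or_lt_of_le hd with rfl | hd0
  · simp
  have hcont : ContinuousOn (fun x : ℝ => x ^ q) (Icc a (a + d)) := fun x _ =>
    (Real.continuousAt_rpow_const x q (Or.inr (by linarith))).continuousWithinAt
  have hderiv : ∀ x ∈ Ioo a (a + d),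
      HasDerivAt (fun x : ℝ => x ^ q) (q * x ^ (q - 1)) x := fun x _ =>
    Real.hasDerivAt_rpow_const (Or.inr hq.le)
  obtain ⟨c, hc, hceq⟩ := exists_hasDerivAt_eq_slope (fun x : ℝ => x ^ q)
    (fun x => q * x ^ (q - 1)) (by linarith) hcont hderiv
  have hslope : (a + d) ^ q - a ^ q = q * c ^ (q - 1) * d := by
    have hne : a + d - a = d := by ring
    rw [hne] at hceq
    field_simp at hceq ⊢
    linarith [hceq]
  have hcb : c ^ (q - 1) ≤ (A + d0) ^ (q - 1) :=
    Real.rpow_le_rpow (le_trans ha hc.1.le) (by linarith [hc.2]) (by linarith)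
  nlinarith [mul_le_mul_of_nonneg_right hcb (le_of_lt hd0),
    mul_le_mul_of_nonneg_left (mul_le_mul_of_nonneg_right hcb hd0.le) (by linarith : (0:ℝ) ≤ q)]

theorem ennreal_rpow_add_le {q A d0 : ℝ} (hq : 1 < q) (hA : 0 ≤ A) (hd0 : 0 ≤ d0)
    {x d : ℝ≥0∞} (hx : x ≤ ENNReal.ofReal A) (hd : d ≤ ENNReal.ofReal d0) :
    (x + d) ^ q ≤ x ^ q + ENNReal.ofReal (q * (A + d0) ^ (q - 1)) * d := by
  have hxt : x ≠ ⊤ := ne_top_of_le_ne_top ENNReal.ofReal_ne_top hx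
  have hdt : d ≠ ⊤ := ne_top_of_le_ne_top ENNReal.ofReal_ne_top hd
  have hxr : x = ENNReal.ofReal x.toReal := (ENNReal.ofReal_toReal hxt).symm
  have hdr : d = ENNReal.ofReal d.toReal := (ENNReal.ofReal_toReal hdt).symm
  have hxA : x.toReal ≤ A := by
    rw [hxr] at hx
    exact (ENNReal.ofReal_le_ofReal_iff hA).mp hx
  have hdd0 : d.toReal ≤ d0 := by
    rw [hdr] at hd
    exact (ENNReal.ofReal_le_ofReal_iff hd0).mp hd
  have hkey := real_rpow_add_le hq ENNReal.toReal_nonneg hxA ENNReal.toReal_nonneg hdd0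
  calc (x + d) ^ q = ENNReal.ofReal ((x.toReal + d.toReal) ^ q) := by
        rw [hxr, hdr, ← ENNReal.ofReal_add ENNReal.toReal_nonneg ENNReal.toReal_nonneg,
          ENNReal.ofReal_rpow_of_nonneg (by positivity) (by linarith)]
        simp [ENNReal.toReal_ofReal, ENNReal.toReal_nonneg]
    _ ≤ ENNReal.ofReal (x.toReal ^ q + q * (A + d0) ^ (q - 1) * d.toReal) :=
        ENNReal.ofReal_le_ofReal hkey
    _ ≤ x ^ q + ENNReal.ofReal (q * (A + d0) ^ (q - 1)) * d := by
        rw [ENNReal.ofReal_add (by positivity) (by positivity),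
          ENNReal.ofReal_mul (by positivity)]
        gcongr
        · rw [hxr, ENNReal.ofReal_rpow_of_nonneg ENNReal.toReal_nonneg (by linarith)]
          simp [ENNReal.toReal_ofReal, ENNReal.toReal_nonneg]
        · rw [hdr]
          simp [ENNReal.toReal_ofReal, ENNReal.toReal_nonneg]

section Kernel

variable {G : Type*} [Countable G]

/-- kernel in `ℝ≥0∞` -/
noncomputable def PE (p : G → G → ℝ → ℝ) (x y : G) (t : ℝ) : ℝ≥0∞ := ENNReal.ofReal (p x y t)

noncomputable def muE (μ : G → ℝ) (y : G) : ℝ≥0∞ := ENNReal.ofReal (μ y)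

/-- sub-Markov transition operator in `ℝ≥0∞` -/
noncomputable def Pt (μ : G → ℝ) (p : G → G → ℝ → ℝ) (δ : ℝ) (f : G → ℝ≥0∞) (x : G) : ℝ≥0∞ :=
  ∑' y, PE p x y δ * f y * muE μ y

noncomputable def LinP (μ : G → ℝ) (p : G → G → ℝ → ℝ) (u₀ : G → ℝ) (x : G) (t : ℝ) : ℝ≥0∞ :=
  Pt μ p t (fun y => ENNReal.ofReal (u₀ y)) x

noncomputable def PhiF (μ : G → ℝ) (p : G → G → ℝ → ℝ) (q : ℝ) (v : G → ℝ → ℝ≥0∞)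
    (x : G) (t s : ℝ) : ℝ≥0∞ :=
  Pt μ p (t - s) (fun y => v y s ^ q) x

noncomputable def seqU (μ : G → ℝ) (p : G → G → ℝ → ℝ) (u₀ : G → ℝ) (h : ℝ → ℝ) (q : ℝ) :
    ℕ → G → ℝ → ℝ≥0∞
  | 0 => fun _ _ => 0
  | (n+1) => fun x t => LinP μ p u₀ x t +
      ∫⁻ s in Set.Ioc 0 t, ENNReal.ofReal (h s) * PhiF μ p q (seqU μ p u₀ h q n) x t s

variable (μ : G → ℝ) (hμ : ∀ x, 0 < μ x)
  (p : G → G → ℝ → ℝ) (hp : ∀ x y t, 0 < t → 0 < p x y t)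
  (hsub : ∀ x (t : ℝ), 0 < t →
      Summable (fun y => p x y t * μ y) ∧ (∑' y, p x y t * μ y) ≤ 1)
  (hsemi : ∀ x y (t s : ℝ), 0 < t → 0 < s →
      p x y (t + s) = ∑' z, p x z t * p z y s * μ z)

section CK

include hp hsemi in
theorem summable_CK (x y : G) {a b : ℝ} (ha : 0 < a) (hb : 0 < b) :
    Summable (fun z => p x z a * p z y b * μ z) := by
  by_contra hns
  have h0 := tsum_eq_zero_of_not_summable hns
  have hpos := hp x y (a + b) (by linarith)
  rw [hsemi x y a b ha hb, h0] at hpos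
  exact lt_irrefl 0 hpos

include hμ hp hsemi in
theorem PE_CK (x y : G) {a b : ℝ} (ha : 0 < a) (hb : 0 < b) :
    PE p x y (a + b) = ∑' z, PE p x z a * PE p z y b * muE μ z := by
  have hnn : ∀ z : G, 0 ≤ p x z a * p z y b * μ z := fun z =>
    mul_nonneg (mul_nonneg (hp x z a ha).le (hp z y b hb).le) (hμ z).le
  unfold PE muE
  rw [hsemi x y a b ha hb,
    ENNReal.ofReal_tsum_of_nonneg hnn (summable_CK μ p hp hsemi x y ha hb)]
  exact tsum_congr fun z => by
    rw [ENNReal.ofReal_mul (mul_nonneg (hp x z a ha).le (hp z y b hb).le),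
      ENNReal.ofReal_mul (hp x z a ha).le]

include hμ hp hsub in
theorem PE_substoch (x : G) {δ : ℝ} (hδ : 0 < δ) : ∑' y, PE p x y δ * muE μ y ≤ 1 := by
  unfold PE muE
  have hnn : ∀ y : G, 0 ≤ p x y δ * μ y := fun y =>
    mul_nonneg (hp x y δ hδ).le (hμ y).le
  calc (∑' y, ENNReal.ofReal (p x y δ) * ENNReal.ofReal (μ y))
      = ∑' y, ENNReal.ofReal (p x y δ * μ y) :=
        tsum_congr fun y => (ENNReal.ofReal_mul (hp x y δ hδ).le).symm
    _ = ENNReal.ofReal (∑' y, p x y δ * μ y) :=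
        (ENNReal.ofReal_tsum_of_nonneg hnn (hsub x δ hδ).1).symm
    _ ≤ ENNReal.ofReal 1 := ENNReal.ofReal_le_ofReal (hsub x δ hδ).2
    _ = 1 := ENNReal.ofReal_one

theorem Pt_mono {δ : ℝ} {f g : G → ℝ≥0∞} (hfg : ∀ y, f y ≤ g y) (x : G) :
    Pt μ p δ f x ≤ Pt μ p δ g x :=
  ENNReal.tsum_le_tsum fun y => by
    exact mul_le_mul_left (mul_le_mul_right (hfg y) _) _

theorem Pt_const_mul (δ : ℝ) (c : ℝ≥0∞) (f : G → ℝ≥0∞) (x : G) :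
    Pt μ p δ (fun y => c * f y) x = c * Pt μ p δ f x := by
  unfold Pt
  rw [← ENNReal.tsum_mul_left]
  exact tsum_congr fun y => by ring

include hμ hsub hp in
theorem Pt_le_const (x : G) {δ : ℝ} (hδ : 0 < δ) (c : ℝ≥0∞) :
    Pt μ p δ (fun _ => c) x ≤ c := by
  unfold Pt
  calc ∑' y, PE p x y δ * c * muE μ y = c * ∑' y, PE p x y δ * muE μ y := by
        rw [← ENNReal.tsum_mul_left]; exact tsum_congr fun y => by ring
    _ ≤ c * 1 := mul_le_mul_right (PE_substoch μ hμ p hp hsub x hδ) c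
    _ = c := mul_one c

include hμ hp hsemi in
theorem Pt_comp {a b : ℝ} (ha : 0 < a) (hb : 0 < b) (f : G → ℝ≥0∞) (x : G) :
    Pt μ p a (Pt μ p b f) x = Pt μ p (a + b) f x := by
  unfold Pt
  have step1 : ∀ y, PE p x y a * (∑' z, PE p y z b * f z * muE μ z) * muE μ y
      = ∑' z, PE p x y a * muE μ y * (PE p y z b * muE μ z) * f z := fun y => by
    rw [← ENNReal.tsum_mul_left, ← ENNReal.tsum_mul_right]
    exact tsum_congr fun z => by ring
  calc (∑' y, PE p x y a * (∑' z, PE p y z b * f z * muE μ z) * muE μ y)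
      = ∑' y, ∑' z, PE p x y a * muE μ y * (PE p y z b * muE μ z) * f z :=
        tsum_congr step1
    _ = ∑' z, ∑' y, PE p x y a * muE μ y * (PE p y z b * muE μ z) * f z := ENNReal.tsum_comm
    _ = ∑' z, (∑' y, PE p x y a * PE p y z b * muE μ y) * f z * muE μ z := by
        refine tsum_congr fun z => ?_
        rw [← ENNReal.tsum_mul_right, ← ENNReal.tsum_mul_right]
        exact tsum_congr fun y => by ring
    _ = ∑' z, PE p x z (a + b) * f z * muE μ z := by
        refine tsum_congr fun z => ?_
        rw [← PE_CK μ hμ p hp hsemi x z ha hb]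

include hμ hp hsub in
theorem Pt_jensen {δ : ℝ} (hδ : 0 < δ) (f : G → ℝ≥0∞) (x : G) {q : ℝ} (hq : 1 ≤ q) :
    (Pt μ p δ f x) ^ q ≤ Pt μ p δ (fun y => f y ^ q) x := by
  have hw : ∑' y, PE p x y δ * muE μ y ≤ 1 := PE_substoch μ hμ p hp hsub x hδ
  have h1 : Pt μ p δ f x = ∑' y, (PE p x y δ * muE μ y) * f y := by
    unfold Pt; exact tsum_congr fun y => by ring
  have h2 : Pt μ p δ (fun y => f y ^ q) x = ∑' y, (PE p x y δ * muE μ y) * f y ^ q := by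
    unfold Pt; exact tsum_congr fun y => by ring
  rw [h1, h2]
  exact jensen_tsum _ _ hq hw

end CK

section Bounds

variable (lam γ C : ℝ) (hlam : 0 < lam) (hγ : 0 < γ) (hC : 0 < C)
  (hkernel : ∀ x y (t : ℝ), γ ≤ t → p x y t ≤ C * Real.exp (-lam * t))
  (q : ℝ) (hq : 1 < q) (h : ℝ → ℝ) (hh0 : ∀ t, 0 ≤ t → 0 ≤ h t) (y₀ : G)

include hp in
theorem PE_pos (x y : G) {t : ℝ} (ht : 0 < t) : 0 < PE p x y t :=
  ENNReal.ofReal_pos.mpr (hp x y t ht)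

theorem PE_ne_top (x y : G) (t : ℝ) : PE p x y t ≠ ⊤ := ENNReal.ofReal_ne_top

include hkernel in
theorem PE_le (x y : G) {t : ℝ} (ht : γ ≤ t) :
    PE p x y t ≤ ENNReal.ofReal (C * Real.exp (-lam * t)) :=
  ENNReal.ofReal_le_ofReal (hkernel x y t ht)

include hμ hp hsemi in
theorem Pt_collapse (x : G) {δ r : ℝ} (hδ : 0 < δ) (hr : 0 < r) :
    Pt μ p δ (fun y => PE p y y₀ r) x = PE p x y₀ (δ + r) :=
  (PE_CK μ hμ p hp hsemi x y₀ hδ hr).symm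

include hμ hp hsemi hkernel hlam hγ hC hq in
theorem PhiF_le (v : G → ℝ → ℝ≥0∞) {M : ℝ} (hM : 0 ≤ M)
    (hv : ∀ y s, 0 < s → v y s ≤ ENNReal.ofReal M * PE p y y₀ (s + γ))
    (x : G) {t s : ℝ} (hs : 0 < s) (hst : s < t) :
    PhiF μ p q v x t s ≤ ENNReal.ofReal (M ^ q * C ^ (q - 1))
      * ENNReal.ofReal (Real.exp (-(lam * (q - 1)) * s)) * PE p x y₀ (t + γ) := by
  have hts : 0 < t - s := by linarith
  have hsγ : 0 < s + γ := by linarith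
  have hq0 : (0:ℝ) < q := by linarith
  have hq1 : (0:ℝ) ≤ q - 1 := by linarith
  set cE : ℝ≥0∞ := ENNReal.ofReal (M ^ q * C ^ (q - 1))
      * ENNReal.ofReal (Real.exp (-(lam * (q - 1)) * s)) with hcE
  have hKpow : ∀ y : G, (PE p y y₀ (s + γ)) ^ q ≤
      ENNReal.ofReal (C ^ (q-1) * Real.exp (-(lam * (q - 1)) * s)) * PE p y y₀ (s + γ) := by
    intro y
    have hsplit : (PE p y y₀ (s + γ)) ^ q = (PE p y y₀ (s + γ)) ^ (q - 1) * PE p y y₀ (s + γ) := by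
      conv_lhs => rw [show q = (q - 1) + 1 by ring]
      rw [ENNReal.rpow_add _ _ (PE_pos p hp y y₀ hsγ).ne' (PE_ne_top p y y₀ _),
        ENNReal.rpow_one]
    rw [hsplit]
    refine mul_le_mul_left ?_ _
    calc (PE p y y₀ (s + γ)) ^ (q - 1)
        ≤ (ENNReal.ofReal (C * Real.exp (-lam * (s + γ)))) ^ (q - 1) :=
          ENNReal.rpow_le_rpow (PE_le p lam γ C hkernel y y₀ (by linarith)) hq1
      _ = ENNReal.ofReal ((C * Real.exp (-lam * (s + γ))) ^ (q - 1)) :=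
          ENNReal.ofReal_rpow_of_nonneg (by positivity) hq1
      _ ≤ ENNReal.ofReal ((C * Real.exp (-lam * s)) ^ (q - 1)) := by
          refine ENNReal.ofReal_le_ofReal (Real.rpow_le_rpow (by positivity) ?_ hq1)
          have : Real.exp (-lam * (s + γ)) ≤ Real.exp (-lam * s) :=
            Real.exp_le_exp.mpr (by nlinarith)
          nlinarith [Real.exp_pos (-lam * (s + γ)), Real.exp_pos (-lam * s)]
      _ = ENNReal.ofReal (C ^ (q-1) * Real.exp (-(lam * (q - 1)) * s)) := by
          rw [Real.mul_rpow hC.le (Real.exp_pos _).le, ← Real.exp_mul]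
          ring_nf
  have hvq : ∀ y : G, v y s ^ q ≤ cE * PE p y y₀ (s + γ) := by
    intro y
    calc v y s ^ q ≤ (ENNReal.ofReal M * PE p y y₀ (s + γ)) ^ q :=
          ENNReal.rpow_le_rpow (hv y s hs) hq0.le
      _ = (ENNReal.ofReal M) ^ q * (PE p y y₀ (s + γ)) ^ q :=
          ENNReal.mul_rpow_of_nonneg _ _ hq0.le
      _ ≤ ENNReal.ofReal (M ^ q) *
          (ENNReal.ofReal (C ^ (q-1) * Real.exp (-(lam * (q - 1)) * s)) * PE p y y₀ (s + γ)) := by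
          rw [ENNReal.ofReal_rpow_of_nonneg hM hq0.le]
          exact mul_le_mul_right (hKpow y) _
      _ = cE * PE p y y₀ (s + γ) := by
          rw [hcE, ENNReal.ofReal_mul (by positivity), ENNReal.ofReal_mul (by positivity)]
          ring
  calc PhiF μ p q v x t s ≤ Pt μ p (t - s) (fun y => cE * PE p y y₀ (s + γ)) x :=
        Pt_mono μ p (fun y => hvq y) x
    _ = cE * Pt μ p (t - s) (fun y => PE p y y₀ (s + γ)) x := Pt_const_mul μ p _ _ _ _
    _ = cE * PE p x y₀ (t + γ) := by
        rw [Pt_collapse μ hμ p hp hsemi y₀ x hts hsγ]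
        ring_nf
    _ = ENNReal.ofReal (M ^ q * C ^ (q - 1))
        * ENNReal.ofReal (Real.exp (-(lam * (q - 1)) * s)) * PE p x y₀ (t + γ) := by
        rw [hcE]

theorem PhiF_mono {v w : G → ℝ → ℝ≥0∞} (hvw : ∀ y s, v y s ≤ w y s) {hq0 : 0 ≤ q}
    (x : G) (t s : ℝ) : PhiF μ p q v x t s ≤ PhiF μ p q w x t s :=
  Pt_mono μ p (fun y => ENNReal.rpow_le_rpow (hvw y s) hq0) x

section Fixed

variable (u₀ : G → ℝ) (ε M Htil : ℝ) (hε : 0 < ε) (hM : 0 < M)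
  (hu₀ : ∀ x, 0 ≤ u₀ x ∧ u₀ x ≤ ε * p x y₀ γ)
  (hHtil0 : 0 ≤ Htil)
  (hEinf : (∫⁻ s in Set.Ioi (0:ℝ),
      ENNReal.ofReal (h s) * ENNReal.ofReal (Real.exp (-(lam * (q - 1)) * s))) =
      ENNReal.ofReal Htil)
  (hsmall : ε + M ^ q * C ^ (q - 1) * Htil ≤ M)

include hq in
theorem seqU_mono : ∀ n x t, seqU μ p u₀ h q n x t ≤ seqU μ p u₀ h q (n+1) x t := by
  intro n
  induction n with
  | zero => exact fun x t => zero_le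
  | succ n ih =>
    intro x t
    show LinP μ p u₀ x t + _ ≤ LinP μ p u₀ x t + _
    refine add_le_add_right (lintegral_mono fun s => ?_) _
    exact mul_le_mul_right
      (PhiF_mono μ p q (fun y s => ih y s) (hq0 := by linarith) x t s) _

include hμ hp hsemi hlam hγ hC hkernel hq hε hM hu₀ hHtil0 hEinf hsmall in
theorem seqU_bound : ∀ n x t, 0 < t →
    seqU μ p u₀ h q n x t ≤ ENNReal.ofReal M * PE p x y₀ (t + γ) := by
  intro n
  induction n with
  | zero => exact fun x t _ => zero_le
  | succ n ih =>
    intro x t ht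
    have hLin : LinP μ p u₀ x t ≤ ENNReal.ofReal ε * PE p x y₀ (t + γ) := by
      have h1 : ∀ y : G, ENNReal.ofReal (u₀ y) ≤ ENNReal.ofReal ε * PE p y y₀ γ := by
        intro y
        rw [show ENNReal.ofReal ε * PE p y y₀ γ = ENNReal.ofReal (ε * p y y₀ γ) from
          (ENNReal.ofReal_mul hε.le).symm]
        exact ENNReal.ofReal_le_ofReal (hu₀ y).2
      calc LinP μ p u₀ x t ≤ Pt μ p t (fun y => ENNReal.ofReal ε * PE p y y₀ γ) x :=
            Pt_mono μ p h1 x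
        _ = ENNReal.ofReal ε * Pt μ p t (fun y => PE p y y₀ γ) x := Pt_const_mul μ p _ _ _ _
        _ = ENNReal.ofReal ε * PE p x y₀ (t + γ) := by
            rw [Pt_collapse μ hμ p hp hsemi y₀ x ht hγ]
    have hInt : (∫⁻ s in Set.Ioc 0 t,
        ENNReal.ofReal (h s) * PhiF μ p q (seqU μ p u₀ h q n) x t s) ≤
        ENNReal.ofReal (M ^ q * C ^ (q - 1)) * ENNReal.ofReal Htil * PE p x y₀ (t + γ) := by
      rw [setLIntegral_congr (α := ℝ) (Filter.EventuallyEq.symm Ioo_ae_eq_Ioc)]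
      have hbd : ∀ᵐ s ∂(volume.restrict (Set.Ioo (0:ℝ) t)),
          ENNReal.ofReal (h s) * PhiF μ p q (seqU μ p u₀ h q n) x t s ≤
          ENNReal.ofReal (M ^ q * C ^ (q - 1)) * PE p x y₀ (t + γ) *
            (ENNReal.ofReal (h s) * ENNReal.ofReal (Real.exp (-(lam * (q - 1)) * s))) := by
        refine (ae_restrict_mem measurableSet_Ioo).mono fun s hs => ?_
        have hP := PhiF_le μ hμ p hp hsemi lam γ C hlam hγ hC hkernel q hq y₀
          (seqU μ p u₀ h q n) hM.le (fun y s hs0 => ih y s hs0) x hs.1 hs.2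
        calc ENNReal.ofReal (h s) * PhiF μ p q (seqU μ p u₀ h q n) x t s
            ≤ ENNReal.ofReal (h s) * (ENNReal.ofReal (M ^ q * C ^ (q - 1))
              * ENNReal.ofReal (Real.exp (-(lam * (q - 1)) * s)) * PE p x y₀ (t + γ)) :=
              mul_le_mul_right hP _
          _ = ENNReal.ofReal (M ^ q * C ^ (q - 1)) * PE p x y₀ (t + γ) *
              (ENNReal.ofReal (h s) * ENNReal.ofReal (Real.exp (-(lam * (q - 1)) * s))) := by
              ring
      calc (∫⁻ s in Set.Ioo 0 t,
          ENNReal.ofReal (h s) * PhiF μ p q (seqU μ p u₀ h q n) x t s)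
          ≤ ∫⁻ s in Set.Ioo 0 t, ENNReal.ofReal (M ^ q * C ^ (q - 1)) * PE p x y₀ (t + γ) *
            (ENNReal.ofReal (h s) * ENNReal.ofReal (Real.exp (-(lam * (q - 1)) * s))) :=
            lintegral_mono_ae hbd
        _ = ENNReal.ofReal (M ^ q * C ^ (q - 1)) * PE p x y₀ (t + γ) *
            ∫⁻ s in Set.Ioo 0 t,
              ENNReal.ofReal (h s) * ENNReal.ofReal (Real.exp (-(lam * (q - 1)) * s)) :=
            lintegral_const_mul' _ _ (by
              exact ENNReal.mul_ne_top ENNReal.ofReal_ne_top (PE_ne_top p x y₀ _))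
        _ ≤ ENNReal.ofReal (M ^ q * C ^ (q - 1)) * PE p x y₀ (t + γ) * ENNReal.ofReal Htil := by
            refine mul_le_mul_right ?_ _
            rw [← hEinf]
            exact lintegral_mono' (Measure.restrict_mono
              (fun s hs => hs.1) le_rfl) le_rfl
        _ = ENNReal.ofReal (M ^ q * C ^ (q - 1)) * ENNReal.ofReal Htil * PE p x y₀ (t + γ) := by
            ring
    calc seqU μ p u₀ h q (n+1) x t
        ≤ ENNReal.ofReal ε * PE p x y₀ (t + γ) +
          ENNReal.ofReal (M ^ q * C ^ (q - 1)) * ENNReal.ofReal Htil * PE p x y₀ (t + γ) :=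
          add_le_add hLin hInt
      _ = ENNReal.ofReal (ε + M ^ q * C ^ (q - 1) * Htil) * PE p x y₀ (t + γ) := by
          rw [ENNReal.ofReal_add hε.le (by positivity), add_mul]
          congr 1
          rw [ENNReal.ofReal_mul (by positivity : (0:ℝ) ≤ M ^ q * C ^ (q - 1))]
      _ ≤ ENNReal.ofReal M * PE p x y₀ (t + γ) :=
          mul_le_mul_left (ENNReal.ofReal_le_ofReal hsmall) _

theorem Pt_add (δ : ℝ) (f g : G → ℝ≥0∞) (x : G) :
    Pt μ p δ (fun y => f y + g y) x = Pt μ p δ f x + Pt μ p δ g x := by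
  unfold Pt
  rw [← ENNReal.tsum_add]
  exact tsum_congr fun y => by ring

variable (hHmeas : AEMeasurable (fun s => ENNReal.ofReal (h s))
  (volume.restrict (Set.Ioi (0:ℝ))))

include hHmeas in
theorem Hmeas_on {S : Set ℝ} (hS : S ⊆ Set.Ioi 0) :
    AEMeasurable (fun s => ENNReal.ofReal (h s)) (volume.restrict S) :=
  hHmeas.mono_measure (Measure.restrict_mono hS le_rfl)

include hμ hp hsemi hq hHmeas in
theorem seqU_flow (n : ℕ)
    (hmeas : ∀ (z : G) (t : ℝ), 0 < t → AEMeasurable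
      (fun r => PhiF μ p q (seqU μ p u₀ h q n) z t r) (volume.restrict (Set.Ioo 0 t)))
    (y : G) {s s' : ℝ} (hs : 0 < s) (hss : s < s') :
    seqU μ p u₀ h q (n+1) y s' = Pt μ p (s'-s) (fun z => seqU μ p u₀ h q (n+1) z s) y
      + ∫⁻ r in Set.Ioc s s',
          ENNReal.ofReal (h r) * PhiF μ p q (seqU μ p u₀ h q n) y s' r := by
  have hs' : 0 < s' := hs.trans hss
  have hss0 : 0 < s' - s := by linarith
  set F : ℝ → ℝ≥0∞ :=
    fun r => ENNReal.ofReal (h r) * PhiF μ p q (seqU μ p u₀ h q n) y s' r with hF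
  have hsplit : (∫⁻ r in Set.Ioc 0 s', F r) =
      (∫⁻ r in Set.Ioc 0 s, F r) + ∫⁻ r in Set.Ioc s s', F r := by
    rw [← Set.Ioc_union_Ioc_eq_Ioc hs.le hss.le,
      lintegral_union measurableSet_Ioc (Set.Ioc_disjoint_Ioc_of_le le_rfl)]
  have claim1 : (∫⁻ r in Set.Ioc 0 s, F r) =
      ∑' z, PE p y z (s'-s) *
        (∫⁻ r in Set.Ioc 0 s, ENNReal.ofReal (h r) * PhiF μ p q (seqU μ p u₀ h q n) z s r)
        * muE μ z := by
    have e1 : (∫⁻ r in Set.Ioc 0 s, F r) = ∫⁻ r in Set.Ioo 0 s, F r :=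
      (setLIntegral_congr Ioo_ae_eq_Ioc).symm
    have e2 : ∀ᵐ r ∂(volume.restrict (Set.Ioo (0:ℝ) s)),
        F r = ∑' z, (PE p y z (s'-s) * muE μ z) *
          (ENNReal.ofReal (h r) * PhiF μ p q (seqU μ p u₀ h q n) z s r) := by
      refine (ae_restrict_mem measurableSet_Ioo).mono fun r hr => ?_
      have hr0 : 0 < r := hr.1
      have hrs : 0 < s - r := by have := hr.2; simp only [Set.mem_Ioo] at hr; linarith
      have hcomp : PhiF μ p q (seqU μ p u₀ h q n) y s' r =
          Pt μ p (s'-s) (fun z => PhiF μ p q (seqU μ p u₀ h q n) z s r) y := by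
        show Pt μ p (s' - r) (fun w => seqU μ p u₀ h q n w r ^ q) y = _
        rw [show s' - r = (s' - s) + (s - r) by ring,
          ← Pt_comp μ hμ p hp hsemi hss0 hrs (fun w => seqU μ p u₀ h q n w r ^ q) y]
        rfl
      rw [hF]
      simp only
      rw [hcomp]
      unfold Pt
      rw [← ENNReal.tsum_mul_left]
      exact tsum_congr fun z => by ring
    rw [e1, lintegral_congr_ae e2,
      lintegral_tsum (f := fun z r => PE p y z (s'-s) * muE μ z * (ENNReal.ofReal (h r) * PhiF μ p q (seqU μ p u₀ h q n) z s r)) (fun z => (((Hmeas_on h hHmeas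
        (fun r (hr : r ∈ Set.Ioo (0:ℝ) s) => hr.1)).mul
        (hmeas z s hs)).const_mul (PE p y z (s'-s) * muE μ z)))]
    refine tsum_congr fun z => ?_
    rw [lintegral_const_mul'' (PE p y z (s'-s) * muE μ z)
      (f := fun r => ENNReal.ofReal (h r) * PhiF μ p q (seqU μ p u₀ h q n) z s r)
      ((Hmeas_on h hHmeas
        (fun r (hr : r ∈ Set.Ioo (0:ℝ) s) => hr.1)).mul (hmeas z s hs))]
    rw [setLIntegral_congr (Ioo_ae_eq_Ioc :
      Set.Ioo (0:ℝ) s =ᵐ[volume] Set.Ioc 0 s)]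
    ring
  have claim3 : (∑' z, PE p y z (s'-s) * LinP μ p u₀ z s * muE μ z) = LinP μ p u₀ y s' := by
    have hcomp := Pt_comp μ hμ p hp hsemi hss0 hs (fun w => ENNReal.ofReal (u₀ w)) y
    rw [show s' - s + s = s' by ring] at hcomp
    exact hcomp
  have claim2 : Pt μ p (s'-s) (fun z => seqU μ p u₀ h q (n+1) z s) y =
      (∑' z, PE p y z (s'-s) * LinP μ p u₀ z s * muE μ z) +
      ∑' z, PE p y z (s'-s) *
        (∫⁻ r in Set.Ioc 0 s, ENNReal.ofReal (h r) * PhiF μ p q (seqU μ p u₀ h q n) z s r)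
        * muE μ z := by
    unfold Pt
    rw [← ENNReal.tsum_add]
    refine tsum_congr fun z => ?_
    show PE p y z (s'-s) * (LinP μ p u₀ z s + _) * muE μ z = _
    ring
  calc seqU μ p u₀ h q (n+1) y s' = LinP μ p u₀ y s' + ∫⁻ r in Set.Ioc 0 s', F r := rfl
    _ = LinP μ p u₀ y s' + ((∫⁻ r in Set.Ioc 0 s, F r) + ∫⁻ r in Set.Ioc s s', F r) := by
        rw [hsplit]
    _ = Pt μ p (s'-s) (fun z => seqU μ p u₀ h q (n+1) z s) y + ∫⁻ r in Set.Ioc s s', F r := by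
        rw [claim1, claim2, ← claim3]
        ring

include hμ hp hsub hsemi hlam hγ hC hkernel hq hε hM hu₀ hHtil0 hEinf hsmall hHmeas in
theorem PhiF_succ_est (n : ℕ)
    (hmeas : ∀ (z : G) (t : ℝ), 0 < t → AEMeasurable
      (fun r => PhiF μ p q (seqU μ p u₀ h q n) z t r) (volume.restrict (Set.Ioo 0 t)))
    (x : G) {t s s' : ℝ} (hs : 0 < s) (hss : s < s') (hst : s' < t) :
    PhiF μ p q (seqU μ p u₀ h q (n+1)) x t s' ≤ PhiF μ p q (seqU μ p u₀ h q (n+1)) x t s +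
      ENNReal.ofReal (q * (M * C + M ^ q * C ^ q * Htil) ^ (q - 1) * (M ^ q * C ^ q)) *
        ∫⁻ r in Set.Ioc s s',
          ENNReal.ofReal (h r) * ENNReal.ofReal (Real.exp (-(lam * (q - 1)) * r)) := by
  have hq0 : (0:ℝ) < q := by linarith
  have hs' : 0 < s' := hs.trans hss
  have hss0 : 0 < s' - s := by linarith
  have hts' : 0 < t - s' := by linarith
  set v : G → ℝ≥0∞ := fun z => seqU μ p u₀ h q (n+1) z s with hv
  set D : ℝ≥0∞ := ∫⁻ r in Set.Ioc s s',
      ENNReal.ofReal (h r) * ENNReal.ofReal (Real.exp (-(lam * (q - 1)) * r)) with hD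
  have hDle : D ≤ ENNReal.ofReal Htil := by
    rw [hD, ← hEinf]
    exact lintegral_mono' (Measure.restrict_mono (fun r hr => lt_trans hs hr.1) le_rfl) le_rfl
  -- tail bound
  have htail : ∀ z : G, (∫⁻ r in Set.Ioc s s',
      ENNReal.ofReal (h r) * PhiF μ p q (seqU μ p u₀ h q n) z s' r) ≤
      ENNReal.ofReal (M ^ q * C ^ q) * D := by
    intro z
    have e1 : (∫⁻ r in Set.Ioc s s',
        ENNReal.ofReal (h r) * PhiF μ p q (seqU μ p u₀ h q n) z s' r) =
        ∫⁻ r in Set.Ioo s s',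
        ENNReal.ofReal (h r) * PhiF μ p q (seqU μ p u₀ h q n) z s' r :=
      (setLIntegral_congr Ioo_ae_eq_Ioc).symm
    have e2 : D = ∫⁻ r in Set.Ioo s s',
        ENNReal.ofReal (h r) * ENNReal.ofReal (Real.exp (-(lam * (q - 1)) * r)) := by
      rw [hD]; exact (setLIntegral_congr Ioo_ae_eq_Ioc).symm
    rw [e1, e2]
    have hbd : ∀ᵐ r ∂(volume.restrict (Set.Ioo s s')),
        ENNReal.ofReal (h r) * PhiF μ p q (seqU μ p u₀ h q n) z s' r ≤
        ENNReal.ofReal (M ^ q * C ^ q) *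
          (ENNReal.ofReal (h r) * ENNReal.ofReal (Real.exp (-(lam * (q - 1)) * r))) := by
      refine (ae_restrict_mem measurableSet_Ioo).mono fun r hr => ?_
      have hr0 : 0 < r := hs.trans hr.1
      have hP := PhiF_le μ hμ p hp hsemi lam γ C hlam hγ hC hkernel q hq y₀
        (seqU μ p u₀ h q n) hM.le
        (fun y σ hσ => seqU_bound μ hμ p hp hsemi lam γ C hlam hγ hC hkernel q hq h
          y₀ u₀ ε M Htil hε hM hu₀ hHtil0 hEinf hsmall n y σ hσ) z hr0 hr.2
      have hPE : PE p z y₀ (s' + γ) ≤ ENNReal.ofReal C := by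
        refine le_trans (PE_le p lam γ C hkernel z y₀ (by linarith)) ?_
        refine ENNReal.ofReal_le_ofReal ?_
        nlinarith [Real.exp_le_one_iff.mpr (by nlinarith : -lam * (s' + γ) ≤ 0), hC.le,
          Real.exp_pos (-lam * (s' + γ))]
      calc ENNReal.ofReal (h r) * PhiF μ p q (seqU μ p u₀ h q n) z s' r
          ≤ ENNReal.ofReal (h r) * (ENNReal.ofReal (M ^ q * C ^ (q - 1))
            * ENNReal.ofReal (Real.exp (-(lam * (q - 1)) * r)) * ENNReal.ofReal C) := by
            refine mul_le_mul_right (le_trans hP ?_) _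
            exact mul_le_mul_right hPE _
        _ = ENNReal.ofReal (M ^ q * C ^ q) *
            (ENNReal.ofReal (h r) * ENNReal.ofReal (Real.exp (-(lam * (q - 1)) * r))) := by
            rw [show ENNReal.ofReal (M ^ q * C ^ q) =
              ENNReal.ofReal (M ^ q * C ^ (q - 1)) * ENNReal.ofReal C by
                rw [← ENNReal.ofReal_mul (by positivity)]
                congr 1
                rw [show q = (q - 1) + 1 by ring]
                rw [Real.rpow_add hC, Real.rpow_one]
                ring_nf]
            ring
    calc (∫⁻ r in Set.Ioo s s',
        ENNReal.ofReal (h r) * PhiF μ p q (seqU μ p u₀ h q n) z s' r)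
        ≤ ∫⁻ r in Set.Ioo s s', ENNReal.ofReal (M ^ q * C ^ q) *
          (ENNReal.ofReal (h r) * ENNReal.ofReal (Real.exp (-(lam * (q - 1)) * r))) :=
          lintegral_mono_ae hbd
      _ = ENNReal.ofReal (M ^ q * C ^ q) * ∫⁻ r in Set.Ioo s s',
          ENNReal.ofReal (h r) * ENNReal.ofReal (Real.exp (-(lam * (q - 1)) * r)) :=
          lintegral_const_mul' _ _ ENNReal.ofReal_ne_top
  -- flow bound
  have hflow : ∀ z : G, seqU μ p u₀ h q (n+1) z s' ≤ Pt μ p (s'-s) v z +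
      ENNReal.ofReal (M ^ q * C ^ q) * D := fun z => by
    rw [seqU_flow μ hμ p hp hsemi q hq h u₀ hHmeas n hmeas z hs hss]
    exact add_le_add_right (htail z) _
  -- a priori bound on Pt v
  have haB : ∀ z : G, Pt μ p (s'-s) v z ≤ ENNReal.ofReal (M * C) := by
    intro z
    have hb : ∀ w : G, v w ≤ ENNReal.ofReal M * PE p w y₀ (s + γ) := fun w =>
      seqU_bound μ hμ p hp hsemi lam γ C hlam hγ hC hkernel q hq h y₀ u₀ ε M Htil
        hε hM hu₀ hHtil0 hEinf hsmall (n+1) w s hs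
    calc Pt μ p (s'-s) v z ≤ Pt μ p (s'-s) (fun w => ENNReal.ofReal M * PE p w y₀ (s + γ)) z :=
          Pt_mono μ p hb z
      _ = ENNReal.ofReal M * Pt μ p (s'-s) (fun w => PE p w y₀ (s + γ)) z :=
          Pt_const_mul μ p _ _ _ _
      _ = ENNReal.ofReal M * PE p z y₀ (s' + γ) := by
          rw [Pt_collapse μ hμ p hp hsemi y₀ z hss0 (by linarith)]
          ring_nf
      _ ≤ ENNReal.ofReal M * ENNReal.ofReal C := by
          refine mul_le_mul_right ?_ _
          refine le_trans (PE_le p lam γ C hkernel z y₀ (by linarith)) ?_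
          refine ENNReal.ofReal_le_ofReal ?_
          nlinarith [Real.exp_le_one_iff.mpr (by nlinarith : -lam * (s' + γ) ≤ 0), hC.le,
            Real.exp_pos (-lam * (s' + γ))]
      _ = ENNReal.ofReal (M * C) := (ENNReal.ofReal_mul hM.le).symm
  -- Lipschitz rpow step
  set c1 : ℝ := q * (M * C + M ^ q * C ^ q * Htil) ^ (q - 1) with hc1
  have hlip : ∀ z : G, (seqU μ p u₀ h q (n+1) z s') ^ q ≤
      (Pt μ p (s'-s) v z) ^ q +
        ENNReal.ofReal c1 * (ENNReal.ofReal (M ^ q * C ^ q) * D) := by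
    intro z
    refine le_trans (ENNReal.rpow_le_rpow (hflow z) hq0.le) ?_
    refine ennreal_rpow_add_le hq (by positivity) (by positivity) (haB z) ?_
    calc ENNReal.ofReal (M ^ q * C ^ q) * D ≤
        ENNReal.ofReal (M ^ q * C ^ q) * ENNReal.ofReal Htil := mul_le_mul_right hDle _
      _ = ENNReal.ofReal (M ^ q * C ^ q * Htil) := (ENNReal.ofReal_mul (by positivity)).symm
  -- main chain
  calc PhiF μ p q (seqU μ p u₀ h q (n+1)) x t s'
      ≤ Pt μ p (t - s') (fun z => (Pt μ p (s'-s) v z) ^ q +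
          ENNReal.ofReal c1 * (ENNReal.ofReal (M ^ q * C ^ q) * D)) x :=
        Pt_mono μ p hlip x
    _ = Pt μ p (t - s') (fun z => (Pt μ p (s'-s) v z) ^ q) x +
        Pt μ p (t - s') (fun _ => ENNReal.ofReal c1 * (ENNReal.ofReal (M ^ q * C ^ q) * D)) x :=
        Pt_add μ p _ _ _ x
    _ ≤ Pt μ p (t - s') (fun z => Pt μ p (s'-s) (fun w => v w ^ q) z) x +
        ENNReal.ofReal c1 * (ENNReal.ofReal (M ^ q * C ^ q) * D) := by
        refine add_le_add (Pt_mono μ p (fun z =>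
          Pt_jensen μ hμ p hp hsub hss0 v z hq.le) x) ?_
        exact Pt_le_const μ hμ p hp hsub x hts' _
    _ = Pt μ p (t - s) (fun w => v w ^ q) x +
        ENNReal.ofReal c1 * (ENNReal.ofReal (M ^ q * C ^ q) * D) := by
        rw [Pt_comp μ hμ p hp hsemi hts' hss0 (fun w => v w ^ q) x,
          show t - s' + (s' - s) = t - s by ring]
    _ = PhiF μ p q (seqU μ p u₀ h q (n+1)) x t s +
        ENNReal.ofReal (c1 * (M ^ q * C ^ q)) * D := by
        rw [ENNReal.ofReal_mul (by positivity : (0:ℝ) ≤ c1)]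
        rw [mul_assoc]
        rfl

include hμ hp hsub hsemi hlam hγ hC hkernel hq hε hM hu₀ hHtil0 hEinf hsmall hHmeas in
theorem seqU_phi_meas : ∀ (n : ℕ) (x : G) (t : ℝ), 0 < t →
    AEMeasurable (fun r => PhiF μ p q (seqU μ p u₀ h q n) x t r)
      (volume.restrict (Set.Ioo 0 t)) := by
  intro n
  induction n with
  | zero =>
    intro x t ht
    have hz : (fun r => PhiF μ p q (seqU μ p u₀ h q 0) x t r) = fun _ => 0 := by
      funext r
      show Pt μ p (t - r) (fun y => (0:ℝ≥0∞) ^ q) x = 0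
      rw [ENNReal.zero_rpow_of_pos (by linarith : (0:ℝ) < q)]
      unfold Pt
      simp
    rw [hz]
    exact aemeasurable_const
  | succ n ih =>
    intro x t ht
    set Φ : ℝ → ℝ≥0∞ := fun σ => PhiF μ p q (seqU μ p u₀ h q (n+1)) x t σ with hΦdef
    set Efn : ℝ → ℝ≥0∞ := fun σ => ∫⁻ r in Set.Ioc 0 σ,
      ENNReal.ofReal (h r) * ENNReal.ofReal (Real.exp (-(lam * (q - 1)) * r)) with hEfndef
    set c1 : ℝ := q * (M * C + M ^ q * C ^ q * Htil) ^ (q - 1) * (M ^ q * C ^ q) with hc1def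
    have hc1 : 0 ≤ c1 := by positivity
    have hEmono : Monotone Efn := by
      intro a b hab
      exact lintegral_mono' (Measure.restrict_mono (Set.Ioc_subset_Ioc le_rfl hab) le_rfl) le_rfl
    have hEle : ∀ σ, Efn σ ≤ ENNReal.ofReal Htil := by
      intro σ
      rw [← hEinf]
      exact lintegral_mono' (Measure.restrict_mono (fun r hr => hr.1) le_rfl) le_rfl
    have hEne : ∀ σ, Efn σ ≠ ⊤ := fun σ => ne_top_of_le_ne_top ENNReal.ofReal_ne_top (hEle σ)
    have hEadd : ∀ σ σ' : ℝ, 0 < σ → σ ≤ σ' → Efn σ' = Efn σ + ∫⁻ r in Set.Ioc σ σ',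
        ENNReal.ofReal (h r) * ENNReal.ofReal (Real.exp (-(lam * (q - 1)) * r)) := by
      intro σ σ' hσ hle
      rw [hEfndef]
      simp only
      rw [← Set.Ioc_union_Ioc_eq_Ioc hσ.le hle,
        lintegral_union measurableSet_Ioc (Set.Ioc_disjoint_Ioc_of_le le_rfl)]
    have hΦle : ∀ σ ∈ Set.Ioo (0:ℝ) t, Φ σ ≤
        ENNReal.ofReal (M ^ q * C ^ (q - 1)) * PE p x y₀ (t + γ) := by
      intro σ hσ
      have hP := PhiF_le μ hμ p hp hsemi lam γ C hlam hγ hC hkernel q hq y₀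
        (seqU μ p u₀ h q (n+1)) hM.le
        (fun y σ' hσ' => seqU_bound μ hμ p hp hsemi lam γ C hlam hγ hC hkernel q hq h
          y₀ u₀ ε M Htil hε hM hu₀ hHtil0 hEinf hsmall (n+1) y σ' hσ') x hσ.1 hσ.2
      refine le_trans hP ?_
      have he1 : ENNReal.ofReal (Real.exp (-(lam * (q - 1)) * σ)) ≤ 1 := by
        rw [show (1:ℝ≥0∞) = ENNReal.ofReal 1 from ENNReal.ofReal_one.symm]
        refine ENNReal.ofReal_le_ofReal (Real.exp_le_one_iff.mpr ?_)
        nlinarith [mul_pos (mul_pos hlam (by linarith : (0:ℝ) < q - 1)) hσ.1]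
      calc ENNReal.ofReal (M ^ q * C ^ (q - 1))
          * ENNReal.ofReal (Real.exp (-(lam * (q - 1)) * σ)) * PE p x y₀ (t + γ)
          ≤ ENNReal.ofReal (M ^ q * C ^ (q - 1)) * 1 * PE p x y₀ (t + γ) := by
            exact mul_le_mul_left (mul_le_mul_right he1 _) _
        _ = ENNReal.ofReal (M ^ q * C ^ (q - 1)) * PE p x y₀ (t + γ) := by ring
    have hΦne : ∀ σ ∈ Set.Ioo (0:ℝ) t, Φ σ ≠ ⊤ := fun σ hσ =>
      ne_top_of_le_ne_top (ENNReal.mul_ne_top ENNReal.ofReal_ne_top (PE_ne_top p x y₀ _))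
        (hΦle σ hσ)
    set φ : ℝ → ℝ := fun σ => (Φ σ).toReal with hφdef
    set Er : ℝ → ℝ := fun σ => (Efn σ).toReal with hErdef
    have hErmono : Monotone Er := fun a b hab =>
      ENNReal.toReal_mono (hEne b) (hEmono hab)
    have hanti : AntitoneOn (fun σ => φ σ - c1 * Er σ) (Set.Ioo 0 t) := by
      intro σ hσ σ' hσ' hle
      rcases eq_or_lt_of_le hle with rfl | hlt
      · exact le_refl _
      set D : ℝ≥0∞ := ∫⁻ r in Set.Ioc σ σ',
        ENNReal.ofReal (h r) * ENNReal.ofReal (Real.exp (-(lam * (q - 1)) * r)) with hDdef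
      have hDle' : D ≤ ENNReal.ofReal Htil := by
        rw [← hEinf]
        exact lintegral_mono' (Measure.restrict_mono (fun r hr => hσ.1.trans hr.1) le_rfl) le_rfl
      have hDne : D ≠ ⊤ := ne_top_of_le_ne_top ENNReal.ofReal_ne_top hDle'
      have hest := PhiF_succ_est μ hμ p hp hsub hsemi lam γ C hlam hγ hC hkernel q hq h
        y₀ u₀ ε M Htil hε hM hu₀ hHtil0 hEinf hsmall hHmeas n ih x hσ.1 hlt hσ'.2
      have hφineq : φ σ' ≤ φ σ + c1 * D.toReal := by
        have hrhs_ne : Φ σ + ENNReal.ofReal c1 * D ≠ ⊤ :=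
          ENNReal.add_ne_top.mpr ⟨hΦne σ hσ,
            ENNReal.mul_ne_top ENNReal.ofReal_ne_top hDne⟩
        have h1 := ENNReal.toReal_mono hrhs_ne hest
        rw [ENNReal.toReal_add (hΦne σ hσ)
          (ENNReal.mul_ne_top ENNReal.ofReal_ne_top hDne), ENNReal.toReal_mul,
          ENNReal.toReal_ofReal hc1] at h1
        exact h1
      have hEreq : Er σ' = Er σ + D.toReal := by
        rw [hErdef]
        simp only
        rw [hEadd σ σ' hσ.1 hle, ENNReal.toReal_add (hEne σ) hDne]
      simp only
      rw [hEreq]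
      ring_nf
      ring_nf at hφineq
      nlinarith [hφineq]
    have hφmeas : AEMeasurable φ (volume.restrict (Set.Ioo 0 t)) := by
      have h1 : AEMeasurable (fun σ => φ σ - c1 * Er σ) (volume.restrict (Set.Ioo 0 t)) :=
        aemeasurable_restrict_of_antitoneOn measurableSet_Ioo hanti
      have h2 : Measurable Er := hErmono.measurable
      have h3 : φ = fun σ => (φ σ - c1 * Er σ) + c1 * Er σ := by
        funext σ; ring
      rw [h3]
      exact h1.add ((h2.const_mul c1).aemeasurable)
    have heq : ∀ᵐ σ ∂(volume.restrict (Set.Ioo (0:ℝ) t)),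
        ENNReal.ofReal (φ σ) = Φ σ := by
      refine (ae_restrict_mem measurableSet_Ioo).mono fun σ hσ => ?_
      exact ENNReal.ofReal_toReal (hΦne σ hσ)
    exact (ENNReal.measurable_ofReal.comp_aemeasurable hφmeas).congr heq

end Fixed

end Bounds

end Kernel

theorem tsum_iSup_comm {α : Type*} [Countable α] (f : ℕ → α → ℝ≥0∞) (hf : Monotone f) :
    ∑' y, ⨆ n, f n y = ⨆ n, ∑' y, f n y := by
  letI : MeasurableSpace α := ⊤
  haveI : MeasurableSingletonClass α := ⟨fun _ => trivial⟩
  calc ∑' y, ⨆ n, f n y = ∫⁻ y, ⨆ n, f n y ∂Measure.count := (lintegral_count _).symm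
    _ = ⨆ n, ∫⁻ y, f n y ∂Measure.count :=
        lintegral_iSup (fun _ => measurable_from_top) hf
    _ = ⨆ n, ∑' y, f n y := by
        refine iSup_congr fun n => ?_
        exact lintegral_count _

section Limit

variable {G : Type*} [Countable G]

noncomputable def usolF (μ : G → ℝ) (p : G → G → ℝ → ℝ) (u₀ : G → ℝ) (h : ℝ → ℝ) (q : ℝ)
    (x : G) (t : ℝ) : ℝ≥0∞ := ⨆ n, seqU μ p u₀ h q n x t

variable (μ : G → ℝ) (p : G → G → ℝ → ℝ) (u₀ : G → ℝ) (h : ℝ → ℝ) (q : ℝ) (hq : 1 < q)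

include hq in
theorem PhiF_usol (x : G) (t s : ℝ) :
    PhiF μ p q (usolF μ p u₀ h q) x t s = ⨆ n, PhiF μ p q (seqU μ p u₀ h q n) x t s := by
  have hmono : ∀ n, ∀ x t, seqU μ p u₀ h q n x t ≤ seqU μ p u₀ h q (n+1) x t :=
    fun n => seqU_mono μ p q hq h u₀ n
  show (∑' y, PE p x y (t - s) * (usolF μ p u₀ h q y s) ^ q * muE μ y) = _
  have h1 : ∀ y : G, PE p x y (t - s) * (usolF μ p u₀ h q y s) ^ q * muE μ y
      = ⨆ n, PE p x y (t - s) * (seqU μ p u₀ h q n y s) ^ q * muE μ y := by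
    intro y
    rw [show (usolF μ p u₀ h q y s) ^ q = ⨆ n, (seqU μ p u₀ h q n y s) ^ q from
      rpow_iSup _ (by linarith : (0:ℝ) < q)]
    rw [ENNReal.mul_iSup, ENNReal.iSup_mul]
  calc (∑' y, PE p x y (t - s) * (usolF μ p u₀ h q y s) ^ q * muE μ y)
      = ∑' y, ⨆ n, PE p x y (t - s) * (seqU μ p u₀ h q n y s) ^ q * muE μ y :=
        tsum_congr h1
    _ = ⨆ n, ∑' y, PE p x y (t - s) * (seqU μ p u₀ h q n y s) ^ q * muE μ y := by
        refine tsum_iSup_comm _ fun m n hmn y => ?_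
        refine mul_le_mul_left (mul_le_mul_right (ENNReal.rpow_le_rpow ?_ (by linarith)) _) _
        clear h1
        induction hmn with
        | refl => exact le_refl _
        | step hk ih => exact le_trans ih (hmono _ y s)
    _ = ⨆ n, PhiF μ p q (seqU μ p u₀ h q n) x t s := rfl

end Limit

end GEAux

open GEAux in
/-- global existence of a mild solution for small initial data,
under the heat-kernel bound `p(x,y,t) ≤ C e^{-λt}` for `t ≥ γ` and
`H̃ = ∫₀^∞ h(t) e^{-λ(q-1)t} dt < ∞`. -/
theorem global_existence
    {G : Type*} [Countable G] (μ : G → ℝ) (hμ : ∀ x, 0 < μ x)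
    (p : G → G → ℝ → ℝ) (hp : ∀ x y t, 0 < t → 0 < p x y t)
    (hsub : ∀ x (t : ℝ), 0 < t →
      Summable (fun y => p x y t * μ y) ∧ (∑' y, p x y t * μ y) ≤ 1)
    (hsemi : ∀ x y (t s : ℝ), 0 < t → 0 < s →
      p x y (t + s) = ∑' z, p x z t * p z y s * μ z)
    (lam γ C : ℝ) (hlam : 0 < lam) (hγ : 0 < γ) (hC : 0 < C)
    (hkernel : ∀ x y (t : ℝ), γ ≤ t → p x y t ≤ C * Real.exp (-lam * t))
    (q : ℝ) (hq : 1 < q)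
    (h : ℝ → ℝ) (hh0 : ∀ t, 0 ≤ t → 0 ≤ h t)
    (hloc : MeasureTheory.LocallyIntegrableOn h (Set.Ici 0))
    (hHt : MeasureTheory.IntegrableOn
      (fun t => h t * Real.exp (-(lam * (q - 1)) * t)) (Set.Ioi 0))
    (y₀ : G) :
    ∃ ε₀ > (0:ℝ), ∀ (u₀ : G → ℝ), (∃ B, ∀ x, u₀ x ≤ B) →
      (∃ ε, ε ∈ Set.Ioc 0 ε₀ ∧ ∀ x, 0 ≤ u₀ x ∧ u₀ x ≤ ε * p x y₀ γ) →
      ∃ M > (0:ℝ), ∃ u : G → ℝ → ℝ,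
        (∀ x (t : ℝ), 0 < t → 0 ≤ u x t ∧ u x t ≤ M * p x y₀ (t + γ)) ∧
        (∀ x (t : ℝ), 0 < t →
          u x t = (∑' y, p x y t * u₀ y * μ y)
            + ∫ s in (0:ℝ)..t, ∑' y, p x y (t - s) * h s * u y s ^ q * μ y) := by
  classical
  have hq0 : (0:ℝ) < q := by linarith
  -- measurability of h on (0,∞)
  have hhmeasR : AEMeasurable h (volume.restrict (Set.Ioi (0:ℝ))) := by
    have h1 : AEMeasurable (fun t => h t * Real.exp (-(lam * (q - 1)) * t))
        (volume.restrict (Set.Ioi (0:ℝ))) := hHt.aestronglyMeasurable.aemeasurable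
    have h2 : Measurable fun t : ℝ => Real.exp (lam * (q - 1) * t) :=
      Real.measurable_exp.comp (measurable_id.const_mul _)
    refine (h1.mul h2.aemeasurable).congr (Filter.Eventually.of_forall fun t => ?_)
    have e0 : -(lam * (q - 1)) * t + lam * (q - 1) * t = 0 := by ring
    show h t * Real.exp (-(lam * (q - 1)) * t) * Real.exp (lam * (q - 1) * t) = h t
    rw [mul_assoc, ← Real.exp_add, e0, Real.exp_zero, mul_one]
  have hHmeas : AEMeasurable (fun s => ENNReal.ofReal (h s))
      (volume.restrict (Set.Ioi (0:ℝ))) :=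
    ENNReal.measurable_ofReal.comp_aemeasurable hhmeasR
  -- the finite constant H̃
  set Htil : ℝ := ∫ s in Set.Ioi (0:ℝ), h s * Real.exp (-(lam * (q - 1)) * s) with hHtildef
  have hhnn : 0 ≤ᵐ[volume.restrict (Set.Ioi (0:ℝ))]
      fun s => h s * Real.exp (-(lam * (q - 1)) * s) :=
    (ae_restrict_mem measurableSet_Ioi).mono fun s hs =>
      mul_nonneg (hh0 s (le_of_lt hs)) (Real.exp_pos _).le
  have hHtil0 : 0 ≤ Htil := integral_nonneg_of_ae hhnn
  have hEinf : (∫⁻ s in Set.Ioi (0:ℝ),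
      ENNReal.ofReal (h s) * ENNReal.ofReal (Real.exp (-(lam * (q - 1)) * s))) =
      ENNReal.ofReal Htil := by
    calc (∫⁻ s in Set.Ioi (0:ℝ),
        ENNReal.ofReal (h s) * ENNReal.ofReal (Real.exp (-(lam * (q - 1)) * s)))
        = ∫⁻ s in Set.Ioi (0:ℝ), ENNReal.ofReal (h s * Real.exp (-(lam * (q - 1)) * s)) := by
          refine lintegral_congr_ae ((ae_restrict_mem measurableSet_Ioi).mono fun s hs => ?_)
          show ENNReal.ofReal (h s) * ENNReal.ofReal (Real.exp (-(lam * (q - 1)) * s)) =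
            ENNReal.ofReal (h s * Real.exp (-(lam * (q - 1)) * s))
          rw [ENNReal.ofReal_mul (hh0 s (le_of_lt hs))]
      _ = ENNReal.ofReal Htil :=
          (MeasureTheory.ofReal_integral_eq_lintegral_ofReal hHt hhnn).symm
  -- choice of ε₀
  have hbase : (0:ℝ) < (2:ℝ) ^ q * C ^ (q - 1) * (Htil + 1) := by positivity
  refine ⟨min 1 (((2:ℝ) ^ q * C ^ (q - 1) * (Htil + 1))⁻¹ ^ (1 / (q - 1))),
    lt_min one_pos (Real.rpow_pos_of_pos (inv_pos.mpr hbase) _), ?_⟩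
  rintro u₀ _ ⟨ε, ⟨hε0, hεε₀⟩, hu₀⟩
  set M : ℝ := 2 * ε with hMdef
  have hM : 0 < M := by positivity
  have hsmall : ε + M ^ q * C ^ (q - 1) * Htil ≤ M := by
    have hεq : ε ^ (q - 1) ≤ ((2:ℝ) ^ q * C ^ (q - 1) * (Htil + 1))⁻¹ := by
      have h1 : ε ≤ (((2:ℝ) ^ q * C ^ (q - 1) * (Htil + 1))⁻¹ ^ (1 / (q - 1))) :=
        le_trans hεε₀ (min_le_right _ _)
      calc ε ^ (q - 1)
          ≤ ((((2:ℝ) ^ q * C ^ (q - 1) * (Htil + 1))⁻¹ ^ (1 / (q - 1)))) ^ (q - 1) :=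
            Real.rpow_le_rpow hε0.le h1 (by linarith)
        _ = ((2:ℝ) ^ q * C ^ (q - 1) * (Htil + 1))⁻¹ := by
            rw [← Real.rpow_mul (inv_pos.mpr hbase).le, one_div,
              inv_mul_cancel₀ (by linarith : q - 1 ≠ 0), Real.rpow_one]
    have hM1 : M ^ q * C ^ (q - 1) * Htil ≤ ε := by
      have e1 : M ^ q = 2 ^ q * ε ^ q := by
        rw [hMdef, Real.mul_rpow (by norm_num) hε0.le]
      have e2 : ε ^ q = ε ^ (q - 1) * ε := by
        conv_lhs => rw [show q = (q - 1) + 1 by ring]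
        rw [Real.rpow_add hε0, Real.rpow_one]
      calc M ^ q * C ^ (q - 1) * Htil = (2 ^ q * C ^ (q - 1) * Htil * ε ^ (q - 1)) * ε := by
            rw [e1, e2]; ring
        _ ≤ 1 * ε := by
            refine mul_le_mul_of_nonneg_right ?_ hε0.le
            calc (2:ℝ) ^ q * C ^ (q - 1) * Htil * ε ^ (q - 1)
                ≤ 2 ^ q * C ^ (q - 1) * (Htil + 1) *
                  ((2:ℝ) ^ q * C ^ (q - 1) * (Htil + 1))⁻¹ := by
                  refine mul_le_mul ?_ hεq (by positivity) (by positivity)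
                  have hcc : (0:ℝ) < 2 ^ q * C ^ (q - 1) := by positivity
                  nlinarith
              _ = 1 := mul_inv_cancel₀ hbase.ne'
        _ = ε := one_mul ε
    linarith
  -- measurability of the Picard integrands
  have hphimeas := seqU_phi_meas μ hμ p hp hsub hsemi lam γ C hlam hγ hC hkernel q hq h
    y₀ u₀ ε M Htil hε0 hM hu₀ hHtil0 hEinf hsmall hHmeas
  have hmono := seqU_mono μ p q hq h u₀
  have hΦmono : ∀ x (t s : ℝ), Monotone fun n => PhiF μ p q (seqU μ p u₀ h q n) x t s := by
    intro x t s m n hmn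
    induction hmn with
    | refl => exact le_refl _
    | step _ ih =>
      exact le_trans ih (PhiF_mono μ p q (fun y s => hmono _ y s) (hq0 := by linarith) x t s)
  have husolmeas : ∀ x (t : ℝ), 0 < t → AEMeasurable
      (fun s => PhiF μ p q (usolF μ p u₀ h q) x t s) (volume.restrict (Set.Ioo 0 t)) := by
    intro x t ht
    have heq : (fun s => PhiF μ p q (usolF μ p u₀ h q) x t s) =
        fun s => ⨆ n, PhiF μ p q (seqU μ p u₀ h q n) x t s :=
      funext fun s => PhiF_usol μ p u₀ h q hq x t s
    rw [heq]
    exact AEMeasurable.isLUB (fun n => hphimeas n x t ht)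
      (Filter.Eventually.of_forall fun b => isLUB_iSup)
  -- a priori bound for the limit
  have husb : ∀ y (σ : ℝ), 0 < σ → usolF μ p u₀ h q y σ ≤
      ENNReal.ofReal M * PE p y y₀ (σ + γ) := fun y σ hσ =>
    iSup_le fun n => seqU_bound μ hμ p hp hsemi lam γ C hlam hγ hC hkernel q hq h
      y₀ u₀ ε M Htil hε0 hM hu₀ hHtil0 hEinf hsmall n y σ hσ
  have husne : ∀ y (σ : ℝ), 0 < σ → usolF μ p u₀ h q y σ ≠ ⊤ := fun y σ hσ =>
    ne_top_of_le_ne_top (ENNReal.mul_ne_top ENNReal.ofReal_ne_top ENNReal.ofReal_ne_top)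
      (husb y σ hσ)
  -- the fixed point equation in ℝ≥0∞
  have husol_eq : ∀ x (t : ℝ), 0 < t → usolF μ p u₀ h q x t = LinP μ p u₀ x t +
      ∫⁻ s in Set.Ioc 0 t,
        ENNReal.ofReal (h s) * PhiF μ p q (usolF μ p u₀ h q) x t s := by
    intro x t ht
    have hshift : usolF μ p u₀ h q x t = ⨆ n, seqU μ p u₀ h q (n+1) x t := by
      refine le_antisymm (iSup_le fun n => le_trans (hmono n x t)
        (le_iSup (fun n => seqU μ p u₀ h q (n+1) x t) n))
        (iSup_le fun n => le_iSup (fun n => seqU μ p u₀ h q n x t) (n+1))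
    have hrestr : volume.restrict (Set.Ioc (0:ℝ) t) = volume.restrict (Set.Ioo 0 t) :=
      (Measure.restrict_congr_set Ioo_ae_eq_Ioc).symm
    have hmeasIoc : ∀ n, AEMeasurable
        (fun s => ENNReal.ofReal (h s) * PhiF μ p q (seqU μ p u₀ h q n) x t s)
        (volume.restrict (Set.Ioc 0 t)) := by
      intro n
      rw [hrestr]
      exact (hHmeas.mono_measure (Measure.restrict_mono (fun r hr => hr.1) le_rfl)).mul
        (hphimeas n x t ht)
    calc usolF μ p u₀ h q x t
        = ⨆ n, (LinP μ p u₀ x t + ∫⁻ s in Set.Ioc 0 t,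
            ENNReal.ofReal (h s) * PhiF μ p q (seqU μ p u₀ h q n) x t s) := hshift
      _ = LinP μ p u₀ x t + ⨆ n, ∫⁻ s in Set.Ioc 0 t,
            ENNReal.ofReal (h s) * PhiF μ p q (seqU μ p u₀ h q n) x t s :=
          (ENNReal.add_iSup _).symm
      _ = LinP μ p u₀ x t + ∫⁻ s in Set.Ioc 0 t,
            ⨆ n, ENNReal.ofReal (h s) * PhiF μ p q (seqU μ p u₀ h q n) x t s := by
          rw [lintegral_iSup' hmeasIoc (Filter.Eventually.of_forall fun s m n hmn =>
            mul_le_mul_right (hΦmono x t s hmn) _)]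
      _ = LinP μ p u₀ x t + ∫⁻ s in Set.Ioc 0 t,
            ENNReal.ofReal (h s) * PhiF μ p q (usolF μ p u₀ h q) x t s := by
          refine congrArg _ (lintegral_congr fun s => ?_)
          rw [← ENNReal.mul_iSup, ← PhiF_usol μ p u₀ h q hq x t s]
  refine ⟨M, hM, fun x t => (usolF μ p u₀ h q x t).toReal, ?_, ?_⟩
  · -- bounds
    intro x t ht
    refine ⟨ENNReal.toReal_nonneg, ?_⟩
    have hle : usolF μ p u₀ h q x t ≤ ENNReal.ofReal (M * p x y₀ (t + γ)) := by
      refine le_trans (husb x t ht) ?_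
      rw [ENNReal.ofReal_mul hM.le]
      exact le_refl _
    exact ENNReal.toReal_le_of_le_ofReal
      (mul_nonneg hM.le (hp x y₀ (t + γ) (by linarith)).le) hle
  · -- the equation
    intro x t ht
    have hEq := husol_eq x t ht
    have husolne : usolF μ p u₀ h q x t ≠ ⊤ := husne x t ht
    have hLinne : LinP μ p u₀ x t ≠ ⊤ := by
      have h1 : LinP μ p u₀ x t ≤ usolF μ p u₀ h q x t := by
        refine le_trans (self_le_add_right _ _) (le_iSup (fun n => seqU μ p u₀ h q n x t) 1)
      exact ne_top_of_le_ne_top husolne h1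
    have hIne : (∫⁻ s in Set.Ioc 0 t,
        ENNReal.ofReal (h s) * PhiF μ p q (usolF μ p u₀ h q) x t s) ≠ ⊤ := by
      rw [hEq] at husolne
      exact (ENNReal.add_ne_top.mp husolne).2
    have hrestr : volume.restrict (Set.Ioc (0:ℝ) t) = volume.restrict (Set.Ioo 0 t) :=
      (Measure.restrict_congr_set Ioo_ae_eq_Ioc).symm
    -- claim A : linear part
    have hA : (LinP μ p u₀ x t).toReal = ∑' y, p x y t * u₀ y * μ y := by
      show (∑' y, PE p x y t * ENNReal.ofReal (u₀ y) * muE μ y).toReal = _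
      rw [ENNReal.tsum_toReal_eq
        (f := fun y => PE p x y t * ENNReal.ofReal (u₀ y) * muE μ y)
        (fun y => ENNReal.mul_ne_top (ENNReal.mul_ne_top (PE_ne_top p x y t)
          ENNReal.ofReal_ne_top) ENNReal.ofReal_ne_top)]
      refine tsum_congr fun y => ?_
      rw [ENNReal.toReal_mul, ENNReal.toReal_mul]
      show (ENNReal.ofReal (p x y t)).toReal * _ * (ENNReal.ofReal (μ y)).toReal = _
      rw [ENNReal.toReal_ofReal (hp x y t ht).le, ENNReal.toReal_ofReal (hu₀ y).1,
        ENNReal.toReal_ofReal (hμ y).le]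
    -- claim B : integral part
    have hB : (∫⁻ s in Set.Ioc 0 t,
        ENNReal.ofReal (h s) * PhiF μ p q (usolF μ p u₀ h q) x t s).toReal
        = ∫ s in (0:ℝ)..t, ∑' y, p x y (t - s) * h s *
            (usolF μ p u₀ h q y s).toReal ^ q * μ y := by
      rw [intervalIntegral.integral_of_le ht.le]
      have hΦb : ∀ s ∈ Set.Ioo (0:ℝ) t, PhiF μ p q (usolF μ p u₀ h q) x t s ≤
          ENNReal.ofReal (M ^ q * C ^ (q - 1)) *
            ENNReal.ofReal (Real.exp (-(lam * (q - 1)) * s)) * PE p x y₀ (t + γ) :=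
        fun s hs => PhiF_le μ hμ p hp hsemi lam γ C hlam hγ hC hkernel q hq y₀
          (usolF μ p u₀ h q) hM.le (fun y σ hσ => husb y σ hσ) x hs.1 hs.2
      have hΦne : ∀ s ∈ Set.Ioo (0:ℝ) t, PhiF μ p q (usolF μ p u₀ h q) x t s ≠ ⊤ :=
        fun s hs => ne_top_of_le_ne_top (ENNReal.mul_ne_top
          (ENNReal.mul_ne_top ENNReal.ofReal_ne_top ENNReal.ofReal_ne_top)
          (PE_ne_top p x y₀ _)) (hΦb s hs)
      have hgid : ∀ s ∈ Set.Ioo (0:ℝ) t,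
          (∑' y, p x y (t - s) * h s * (usolF μ p u₀ h q y s).toReal ^ q * μ y)
          = (ENNReal.ofReal (h s) * PhiF μ p q (usolF μ p u₀ h q) x t s).toReal := by
        intro s hs
        have hts : 0 < t - s := by have := hs.2; simp only [Set.mem_Ioo] at hs; linarith
        have hhs : 0 ≤ h s := hh0 s hs.1.le
        have hterm_ne : ∀ y : G, PE p x y (t - s) * (usolF μ p u₀ h q y s) ^ q * muE μ y ≠ ⊤ :=
          fun y => ENNReal.mul_ne_top (ENNReal.mul_ne_top (PE_ne_top p x y _)
            (ENNReal.rpow_ne_top_of_nonneg hq0.le (husne y s hs.1))) ENNReal.ofReal_ne_top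
        calc (∑' y, p x y (t - s) * h s * (usolF μ p u₀ h q y s).toReal ^ q * μ y)
            = ∑' y, (ENNReal.ofReal (h s) *
                (PE p x y (t - s) * (usolF μ p u₀ h q y s) ^ q * muE μ y)).toReal := by
              refine tsum_congr fun y => ?_
              rw [ENNReal.toReal_mul, ENNReal.toReal_mul, ENNReal.toReal_mul]
              show p x y (t - s) * h s * (usolF μ p u₀ h q y s).toReal ^ q * μ y =
                (ENNReal.ofReal (h s)).toReal * ((ENNReal.ofReal (p x y (t - s))).toReal *
                  ((usolF μ p u₀ h q y s) ^ q).toReal * (ENNReal.ofReal (μ y)).toReal)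
              rw [ENNReal.toReal_ofReal hhs, ENNReal.toReal_ofReal (hp x y (t - s) hts).le,
                ENNReal.toReal_ofReal (hμ y).le, ← ENNReal.toReal_rpow]
              ring
          _ = (∑' y, ENNReal.ofReal (h s) *
                (PE p x y (t - s) * (usolF μ p u₀ h q y s) ^ q * muE μ y)).toReal :=
              (ENNReal.tsum_toReal_eq (fun y =>
                ENNReal.mul_ne_top ENNReal.ofReal_ne_top (hterm_ne y))).symm
          _ = (ENNReal.ofReal (h s) * PhiF μ p q (usolF μ p u₀ h q) x t s).toReal := by
              rw [ENNReal.tsum_mul_left]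
              rfl
      have hmeasHPhi : AEMeasurable
          (fun s => ENNReal.ofReal (h s) * PhiF μ p q (usolF μ p u₀ h q) x t s)
          (volume.restrict (Set.Ioo 0 t)) :=
        (hHmeas.mono_measure (Measure.restrict_mono (fun r hr => hr.1) le_rfl)).mul
          (husolmeas x t ht)
      have hmeasg : AEStronglyMeasurable
          (fun s => ∑' y, p x y (t - s) * h s * (usolF μ p u₀ h q y s).toReal ^ q * μ y)
          (volume.restrict (Set.Ioc 0 t)) := by
        rw [hrestr]
        refine ((ENNReal.measurable_toReal.comp_aemeasurable hmeasHPhi).congr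
          ((ae_restrict_mem measurableSet_Ioo).mono fun s hs => (hgid s hs).symm)).aestronglyMeasurable
      have hgnn : 0 ≤ᵐ[volume.restrict (Set.Ioc 0 t)]
          (fun s => ∑' y, p x y (t - s) * h s * (usolF μ p u₀ h q y s).toReal ^ q * μ y) := by
        rw [hrestr]
        refine (ae_restrict_mem measurableSet_Ioo).mono fun s hs => ?_
        show (0:ℝ) ≤ ∑' y, p x y (t - s) * h s * (usolF μ p u₀ h q y s).toReal ^ q * μ y
        rw [hgid s hs]
        exact ENNReal.toReal_nonneg
      rw [integral_eq_lintegral_of_nonneg_ae hgnn hmeasg]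
      congr 1
      rw [setLIntegral_congr (Filter.EventuallyEq.symm Ioo_ae_eq_Ioc),
        setLIntegral_congr (Filter.EventuallyEq.symm (Ioo_ae_eq_Ioc (a := (0:ℝ)) (b := t)))]
      refine lintegral_congr_ae ((ae_restrict_mem measurableSet_Ioo).mono fun s hs => ?_)
      show ENNReal.ofReal (h s) * PhiF μ p q (usolF μ p u₀ h q) x t s =
        ENNReal.ofReal (∑' y, p x y (t - s) * h s * (usolF μ p u₀ h q y s).toReal ^ q * μ y)
      rw [hgid s hs, ENNReal.ofReal_toReal
        (ENNReal.mul_ne_top ENNReal.ofReal_ne_top (hΦne s hs))]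
    show (usolF μ p u₀ h q x t).toReal = _
    rw [hEq, ENNReal.toReal_add hLinne hIne, hA, hB]
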